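/- Let X be a type, 𝒞 a finite concept class over X, and S ⊆ X a finite set of size s that is shattered by 𝒞. Then 𝒞 contains K_{⌊s/2⌋, 2^{⌊s/2⌋}}, i.e., there exist a finite set S₀ ⊆ X with |S₀| = ⌊s/2⌋ and a subset 𝒯 ⊆ 𝒞 with |𝒯| = 2^{⌊s/2⌋} such that c x = true for all x ∈ S₀ and all c ∈ 𝒯. -/

import Mathlib

/-- The concept class `𝒞` contains `K_{s,t}`: there are a finite set `S ⊆ X` of size `s`
and a subset `𝒯 ⊆ 𝒞` of size `t` with `c x = true` for all `x ∈ S`, `c ∈ 𝒯`. -/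
def ContainsK {X : Type*} (𝒞 : Finset (X → Bool)) (s t : ℕ) : Prop :=
  ∃ S : Finset X, S.card = s ∧ ∃ 𝒯 ⊆ 𝒞, 𝒯.card = t ∧ ∀ x ∈ S, ∀ c ∈ 𝒯, c x = true

theorem shattered_implies_biclique {X : Type*} (𝒞 : Finset (X → Bool))
    (S : Finset X) (s : ℕ) (hcard : S.card = s)
    (hshatter : ∀ g : X → Bool, ∃ c ∈ 𝒞, ∀ x ∈ S, c x = g x) :
    ContainsK 𝒞 (s / 2) (2 ^ (s / 2)) := by
  classical
  obtain ⟨S₀, hS₀sub, hS₀card⟩ := S.exists_subset_card_eq (n := s / 2) (by omega)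
  have hsd : (S \ S₀).card = s - s / 2 := by
    rw [Finset.card_sdiff_of_subset hS₀sub, hcard, hS₀card]
  obtain ⟨R₀, hR₀sub, hR₀card⟩ := (S \ S₀).exists_subset_card_eq (n := s / 2) (by omega)
  set g : Finset X → X → Bool := fun A x => if x ∈ S₀ then true else decide (x ∈ A) with hg
  choose c hcmem hceq using fun A : Finset X => hshatter (g A)
  have hR₀S : ∀ x ∈ R₀, x ∈ S ∧ x ∉ S₀ := by
    intro x hx
    have := hR₀sub hx
    exact ⟨(Finset.mem_sdiff.mp this).1, (Finset.mem_sdiff.mp this).2⟩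
  have hinj : Set.InjOn c R₀.powerset := by
    intro A hA B hB hAB
    rw [Finset.mem_coe, Finset.mem_powerset] at hA hB
    ext x
    constructor
    · intro hx
      have hxR := hA hx
      obtain ⟨hxS, hxS₀⟩ := hR₀S x hxR
      have h1 := hceq A x hxS
      have h2 := hceq B x hxS
      rw [hAB] at h1
      rw [h1] at h2
      simp only [hg, if_neg hxS₀, decide_eq_decide] at h2
      exact h2.mp hx
    · intro hx
      have hxR := hB hx
      obtain ⟨hxS, hxS₀⟩ := hR₀S x hxR
      have h1 := hceq A x hxS
      have h2 := hceq B x hxS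
      rw [hAB] at h1
      rw [h1] at h2
      simp only [hg, if_neg hxS₀, decide_eq_decide] at h2
      exact h2.mpr hx
  refine ⟨S₀, hS₀card, R₀.powerset.image c, ?_, ?_, ?_⟩
  · intro f hf
    obtain ⟨A, _, rfl⟩ := Finset.mem_image.mp hf
    exact hcmem A
  · rw [Finset.card_image_of_injOn hinj, Finset.card_powerset, hR₀card]
  · intro x hx f hf
    obtain ⟨A, _, rfl⟩ := Finset.mem_image.mp hf
    rw [hceq A x (hS₀sub hx)]
    simp [hg, hx]
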